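/- Let γ > 0, let h ∈ L¹(0,γ), c ∈ ℝ, and define p : [0,γ] → ℝ by p(x) = c + ∫_0^x h(s) ds (so p is absolutely continuous with p′ = h a.e.), and let q ∈ L¹(0,γ). Then for every ε > 0 there exist C > 0 and R > 0 such that for all k ∈ ℂ with Im k ≥ 0 and |k| ≥ R: |∫_0^γ (2k²p(x) + q(x)) e^{−2ikx} dx − ik·p(γ)·e^{−2ikγ}| ≤ ε·|k|·e^{2γ·Im k} + C·|k|. -/

import Mathlib

set_option maxHeartbeats 1000000

open Complex MeasureTheory intervalIntegral

lemma norm_Ek (k : ℂ) (x : ℝ) : ‖Complex.exp (-(2*Complex.I*k*x))‖ = Real.exp (2*x*k.im) := by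
  rw [Complex.norm_exp]
  congr 1
  simp [Complex.mul_re, Complex.mul_im]
  ring

lemma contEk (k : ℂ) : Continuous (fun x : ℝ => Complex.exp (-(2*Complex.I*k*x))) := by
  fun_prop

lemma fubini_step {γ : ℝ} (hγ : 0 < γ) {h : ℝ → ℝ} (hh : IntegrableOn h (Set.Ioc 0 γ))
    (k : ℂ) (him : 0 ≤ k.im) :
    ∫ x in Set.Ioc (0:ℝ) γ, ((∫ s in (0:ℝ)..x, h s : ℝ) : ℂ) * Complex.exp (-(2*Complex.I*k*x))
    = ∫ s in Set.Ioc (0:ℝ) γ, (h s : ℂ) * ∫ x in Set.Ioc s γ, Complex.exp (-(2*Complex.I*k*x)) := by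
  set μ := volume.restrict (Set.Ioc (0:ℝ) γ) with hμ
  haveI : IsFiniteMeasure μ := by
    constructor
    rw [hμ, Measure.restrict_apply_univ, Real.volume_Ioc]
    exact ENNReal.ofReal_lt_top
  set T : Set (ℝ × ℝ) := {p | p.2 ≤ p.1} with hT
  have hTm : MeasurableSet T := measurableSet_le measurable_snd measurable_fst
  set F : ℝ × ℝ → ℂ :=
    T.indicator (fun p => (h p.2 : ℂ) * Complex.exp (-(2*Complex.I*k*p.1))) with hF
  have hmeas : AEStronglyMeasurable F (μ.prod μ) := by
    apply AEStronglyMeasurable.indicator _ hTm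
    exact (hh.ofReal.aestronglyMeasurable.comp_snd).mul
      (((contEk k).comp continuous_fst).aestronglyMeasurable)
  have hint : Integrable F (μ.prod μ) := by
    have hB : Integrable (fun p : ℝ × ℝ => |h p.2| * Real.exp (2*γ*k.im)) (μ.prod μ) := by
      have h1 : Integrable (fun p : ℝ × ℝ => (1:ℝ) * |h p.2|) (μ.prod μ) :=
        (integrable_const (1:ℝ)).mul_prod hh.abs
      simpa using h1.mul_const (Real.exp (2*γ*k.im))
    refine hB.mono' hmeas ?_
    rw [hμ, Measure.prod_restrict]
    filter_upwards [ae_restrict_mem (measurableSet_Ioc.prod measurableSet_Ioc)] with p hp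
    rcases hp with ⟨hp1, hp2⟩
    by_cases hpT : p ∈ T
    · rw [hF, Set.indicator_of_mem hpT, norm_mul, norm_Ek, Complex.norm_real]
      have : Real.exp (2*p.1*k.im) ≤ Real.exp (2*γ*k.im) := by
        apply Real.exp_le_exp.2; nlinarith [hp1.2]
      calc ‖h p.2‖ * Real.exp (2*p.1*k.im) ≤ ‖h p.2‖ * Real.exp (2*γ*k.im) :=
            mul_le_mul_of_nonneg_left this (norm_nonneg _)
        _ = |h p.2| * Real.exp (2*γ*k.im) := by rw [Real.norm_eq_abs]
    · rw [hF, Set.indicator_of_notMem hpT]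
      simp only [norm_zero]
      positivity
  have swap := MeasureTheory.integral_integral_swap (f := fun x s => F (x, s))
    (μ := μ) (ν := μ) hint
  calc ∫ x in Set.Ioc (0:ℝ) γ, ((∫ s in (0:ℝ)..x, h s : ℝ) : ℂ) * Complex.exp (-(2*Complex.I*k*x))
      = ∫ x in Set.Ioc (0:ℝ) γ, ∫ s in Set.Ioc (0:ℝ) γ, F (x, s) := by
        refine setIntegral_congr_fun measurableSet_Ioc (fun x hx => ?_)
        have hFx : ∀ s : ℝ, F (x, s) =
            (Set.Iic x).indicator (fun s => (h s : ℂ) * Complex.exp (-(2*Complex.I*k*x))) s := by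
          intro s
          simp only [hF, hT, Set.indicator_apply, Set.mem_setOf_eq, Set.mem_Iic]
        simp_rw [hFx]
        rw [setIntegral_indicator measurableSet_Iic, Set.Ioc_inter_Iic,
          min_eq_right hx.2, MeasureTheory.integral_mul_const, intervalIntegral.integral_of_le hx.1.le,
          show ((∫ s in Set.Ioc (0:ℝ) x, h s : ℝ) : ℂ) = ∫ s in Set.Ioc (0:ℝ) x, (h s : ℂ)
            from (integral_ofReal (𝕜 := ℂ)).symm]
    _ = ∫ s in Set.Ioc (0:ℝ) γ, ∫ x in Set.Ioc (0:ℝ) γ, F (x, s) := swap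
    _ = ∫ s in Set.Ioc (0:ℝ) γ, (h s : ℂ) * ∫ x in Set.Ioc s γ, Complex.exp (-(2*Complex.I*k*x)) := by
        refine setIntegral_congr_fun measurableSet_Ioc (fun s hs => ?_)
        have hFs : ∀ x : ℝ, F (x, s) =
            (Set.Ici s).indicator (fun x => (h s : ℂ) * Complex.exp (-(2*Complex.I*k*x))) x := by
          intro x
          simp only [hF, hT, Set.indicator_apply, Set.mem_setOf_eq, Set.mem_Ici]
        simp_rw [hFs]
        rw [setIntegral_indicator measurableSet_Ici]
        have hset : Set.Ioc (0:ℝ) γ ∩ Set.Ici s = Set.Icc s γ := by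
          ext y
          simp only [Set.mem_inter_iff, Set.mem_Ioc, Set.mem_Ici, Set.mem_Icc]
          constructor
          · rintro ⟨⟨_, h2⟩, h3⟩; exact ⟨h3, h2⟩
          · rintro ⟨h1, h2⟩; exact ⟨⟨lt_of_lt_of_le hs.1 h1, h2⟩, h1⟩
        rw [hset, integral_Icc_eq_integral_Ioc, MeasureTheory.integral_const_mul]

lemma mulEk_integrable {γ : ℝ} (hγ : 0 < γ) {f : ℝ → ℝ} (hf : IntegrableOn f (Set.Ioc 0 γ))
    (k : ℂ) (him : 0 ≤ k.im) :
    IntegrableOn (fun x => (f x : ℂ) * Complex.exp (-(2*Complex.I*k*x))) (Set.Ioc 0 γ) := by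
  refine Integrable.mono' (hf.norm.mul_const (Real.exp (2*γ*k.im)))
    (hf.ofReal.aestronglyMeasurable.mul (contEk k).aestronglyMeasurable) ?_
  filter_upwards [ae_restrict_mem measurableSet_Ioc] with x hx
  rw [norm_mul, norm_Ek, Complex.norm_real]
  have : Real.exp (2*x*k.im) ≤ Real.exp (2*γ*k.im) := by
    apply Real.exp_le_exp.2; nlinarith [hx.2, hx.1]
  calc ‖f x‖ * Real.exp (2*x*k.im) ≤ ‖f x‖ * Real.exp (2*γ*k.im) := by
        exact mul_le_mul_of_nonneg_left this (norm_nonneg _)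

lemma key_identity {γ : ℝ} (hγ : 0 < γ) {h q : ℝ → ℝ} (c : ℝ)
    (hh : IntegrableOn h (Set.Ioc 0 γ)) (hq : IntegrableOn q (Set.Ioc 0 γ))
    (k : ℂ) (him : 0 ≤ k.im) (hk : k ≠ 0) :
    (∫ x in (0:ℝ)..γ,
        (2 * k ^ 2 * ((c + ∫ s in (0:ℝ)..x, h s : ℝ) : ℂ) + (q x : ℂ))
          * Complex.exp (-(2 * Complex.I * k * x)))
      - Complex.I * k * ((c + ∫ s in (0:ℝ)..γ, h s : ℝ) : ℂ)
          * Complex.exp (-(2 * Complex.I * k * γ))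
    = -(Complex.I * k * c)
      - Complex.I * k * (∫ x in Set.Ioc (0:ℝ) γ, (h x : ℂ) * Complex.exp (-(2*Complex.I*k*x)))
      + ∫ x in Set.Ioc (0:ℝ) γ, (q x : ℂ) * Complex.exp (-(2*Complex.I*k*x)) := by
  have hD : (-(2*Complex.I*k)) ≠ 0 :=
    neg_ne_zero.2 (mul_ne_zero (mul_ne_zero two_ne_zero Complex.I_ne_zero) hk)
  have hEeval : ∀ a b : ℝ, (∫ x in a..b, Complex.exp (-(2*Complex.I*k*x)))
      = (Complex.exp (-(2*Complex.I*k*b)) - Complex.exp (-(2*Complex.I*k*a))) / (-(2*Complex.I*k)) := by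
    intro a b
    have hrw : ∀ x : ℝ, -(2*Complex.I*k*(x:ℂ)) = (-(2*Complex.I*k))*(x:ℂ) := fun x => by ring
    simp_rw [hrw]
    exact integral_exp_mul_complex hD
  -- integrability
  have iE : IntegrableOn (fun x : ℝ => Complex.exp (-(2*Complex.I*k*x))) (Set.Ioc 0 γ) :=
    (contEk k).integrableOn_Ioc
  have i1 : IntegrableOn (fun x : ℝ => 2*k^2*(c:ℂ) * Complex.exp (-(2*Complex.I*k*x)))
      (Set.Ioc 0 γ) := iE.const_mul _
  have iq : IntegrableOn (fun x : ℝ => (q x : ℂ) * Complex.exp (-(2*Complex.I*k*x)))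
      (Set.Ioc 0 γ) := mulEk_integrable hγ hq k him
  have hIcc : IntegrableOn h (Set.Icc 0 γ) := by
    apply hh.congr_set_ae
    exact (MeasureTheory.Ioc_ae_eq_Icc).symm
  have cP : ContinuousOn (fun x : ℝ => (∫ s in (0:ℝ)..x, h s)) (Set.Icc 0 γ) := by
    apply (intervalIntegral.continuousOn_primitive hIcc).congr
    intro x hx
    exact intervalIntegral.integral_of_le hx.1
  have iP : IntegrableOn
      (fun x : ℝ => ((∫ s in (0:ℝ)..x, h s : ℝ) : ℂ) * Complex.exp (-(2*Complex.I*k*x)))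
      (Set.Ioc 0 γ) := by
    exact (((Complex.continuous_ofReal.comp_continuousOn cP).mul
      (contEk k).continuousOn).integrableOn_Icc).mono_set Set.Ioc_subset_Icc_self
  have i2 : IntegrableOn
      (fun x : ℝ => 2*k^2 * (((∫ s in (0:ℝ)..x, h s : ℝ) : ℂ) * Complex.exp (-(2*Complex.I*k*x))))
      (Set.Ioc 0 γ) := iP.const_mul _
  -- split the integral
  have integrand_eq : ∀ x : ℝ,
      (2 * k ^ 2 * ((c + ∫ s in (0:ℝ)..x, h s : ℝ) : ℂ) + (q x : ℂ))
          * Complex.exp (-(2 * Complex.I * k * x))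
      = 2*k^2*(c:ℂ) * Complex.exp (-(2*Complex.I*k*x))
        + 2*k^2 * (((∫ s in (0:ℝ)..x, h s : ℝ) : ℂ) * Complex.exp (-(2*Complex.I*k*x)))
        + (q x : ℂ) * Complex.exp (-(2*Complex.I*k*x)) := by
    intro x; push_cast; ring
  rw [intervalIntegral.integral_of_le hγ.le]
  simp_rw [integrand_eq]
  have i12 : IntegrableOn
      (fun x : ℝ => 2*k^2*(c:ℂ) * Complex.exp (-(2*Complex.I*k*x))
        + 2*k^2 * (((∫ s in (0:ℝ)..x, h s : ℝ) : ℂ) * Complex.exp (-(2*Complex.I*k*x))))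
      (Set.Ioc 0 γ) := i1.add i2
  rw [MeasureTheory.integral_add i12 iq, MeasureTheory.integral_add i1 i2]
  -- evaluate piece 1
  have A1 : (∫ x in Set.Ioc (0:ℝ) γ, 2*k^2*(c:ℂ) * Complex.exp (-(2*Complex.I*k*x)))
      = 2*k^2*(c:ℂ) * ((Complex.exp (-(2*Complex.I*k*γ)) - 1) / (-(2*Complex.I*k))) := by
    rw [MeasureTheory.integral_const_mul, ← intervalIntegral.integral_of_le hγ.le, hEeval 0 γ]
    norm_num
  -- evaluate piece 2
  have A2 : (∫ x in Set.Ioc (0:ℝ) γ,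
        2*k^2 * (((∫ s in (0:ℝ)..x, h s : ℝ) : ℂ) * Complex.exp (-(2*Complex.I*k*x))))
      = 2*k^2 * ((((∫ s in Set.Ioc (0:ℝ) γ, h s : ℝ) : ℂ)
            * Complex.exp (-(2*Complex.I*k*γ))) * (-(2*Complex.I*k))⁻¹
          - (∫ x in Set.Ioc (0:ℝ) γ, (h x : ℂ) * Complex.exp (-(2*Complex.I*k*x)))
            * (-(2*Complex.I*k))⁻¹) := by
    rw [MeasureTheory.integral_const_mul, fubini_step hγ hh k him]
    congr 1
    have step : ∀ s ∈ Set.Ioc (0:ℝ) γ,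
        (h s : ℂ) * ∫ x in Set.Ioc s γ, Complex.exp (-(2*Complex.I*k*x))
        = ((h s : ℂ) * Complex.exp (-(2*Complex.I*k*γ))) * (-(2*Complex.I*k))⁻¹
          - ((h s : ℂ) * Complex.exp (-(2*Complex.I*k*s))) * (-(2*Complex.I*k))⁻¹ := by
      intro s hs
      rw [← intervalIntegral.integral_of_le hs.2, hEeval s γ]
      field_simp
      ring
    rw [setIntegral_congr_fun measurableSet_Ioc step]
    have if1 : IntegrableOn
        (fun s : ℝ => (h s : ℂ) * Complex.exp (-(2*Complex.I*k*(γ:ℝ))) * (-(2*Complex.I*k))⁻¹)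
        (Set.Ioc 0 γ) := (hh.ofReal.mul_const _).mul_const _
    have if2 : IntegrableOn
        (fun s : ℝ => (h s : ℂ) * Complex.exp (-(2*Complex.I*k*s)) * (-(2*Complex.I*k))⁻¹)
        (Set.Ioc 0 γ) := (mulEk_integrable hγ hh k him).mul_const _
    rw [MeasureTheory.integral_sub if1 if2,
      MeasureTheory.integral_mul_const, MeasureTheory.integral_mul_const,
      MeasureTheory.integral_mul_const,
      show (∫ s in Set.Ioc (0:ℝ) γ, (h s : ℂ)) = ((∫ s in Set.Ioc (0:ℝ) γ, h s : ℝ) : ℂ)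
        from integral_ofReal (𝕜 := ℂ)]
  rw [A1, A2]
  -- final algebra
  have hcast : ((c + ∫ s in (0:ℝ)..γ, h s : ℝ) : ℂ)
      = (c : ℂ) + ((∫ s in Set.Ioc (0:ℝ) γ, h s : ℝ) : ℂ) := by
    rw [intervalIntegral.integral_of_le hγ.le]; push_cast; ring
  rw [hcast]
  set Eg := Complex.exp (-(2*Complex.I*k*(γ:ℝ))) with hEg
  set J := ∫ x in Set.Ioc (0:ℝ) γ, (h x : ℂ) * Complex.exp (-(2*Complex.I*k*x)) with hJ
  set Q := ∫ x in Set.Ioc (0:ℝ) γ, (q x : ℂ) * Complex.exp (-(2*Complex.I*k*x)) with hQ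
  set H := ((∫ s in Set.Ioc (0:ℝ) γ, h s : ℝ) : ℂ) with hH
  field_simp
  linear_combination (k*(c:ℂ) - k*(c:ℂ)*Eg - k*Eg*H + k*J) * Complex.I_sq

lemma exp_split {M ε u γ t : ℝ} (hM : 0 ≤ M) (hε : 0 < ε) (hu : 0 ≤ u) (huγ : u < γ)
    (ht : 0 ≤ t) :
    M * Real.exp (2*u*t) ≤ (ε/4) * Real.exp (2*γ*t)
      + M * Real.exp (2*u*(max 1 (Real.log (4*M/ε + 1) / (2*(γ-u))))) := by
  set T₀ := max 1 (Real.log (4*M/ε + 1) / (2*(γ-u))) with hT0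
  by_cases hcase : t ≤ T₀
  · have h1 : Real.exp (2*u*t) ≤ Real.exp (2*u*T₀) := Real.exp_le_exp.2 (by nlinarith)
    have h2 : M * Real.exp (2*u*t) ≤ M * Real.exp (2*u*T₀) :=
      mul_le_mul_of_nonneg_left h1 hM
    nlinarith [Real.exp_pos (2*γ*t)]
  · push_neg at hcase
    have hd : 0 < 2*(γ-u) := by linarith
    have hlogle : Real.log (4*M/ε + 1) / (2*(γ-u)) ≤ T₀ := le_max_right _ _
    have h1 : Real.log (4*M/ε + 1) ≤ 2*(γ-u)*t := by
      have := (div_le_iff₀ hd).1 hlogle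
      nlinarith
    have h2 : 4*M/ε + 1 ≤ Real.exp (2*(γ-u)*t) := by
      calc 4*M/ε + 1 = Real.exp (Real.log (4*M/ε + 1)) :=
            (Real.exp_log (by positivity)).symm
        _ ≤ Real.exp (2*(γ-u)*t) := Real.exp_le_exp.2 h1
    have h3 : M ≤ ε/4 * Real.exp (2*(γ-u)*t) := by
      have h4 : ε/4 * (4*M/ε + 1) ≤ ε/4 * Real.exp (2*(γ-u)*t) :=
        mul_le_mul_of_nonneg_left h2 (by positivity)
      have h5 : ε/4 * (4*M/ε + 1) = M + ε/4 := by field_simp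
      linarith
    have h4 : Real.exp (2*γ*t) = Real.exp (2*u*t) * Real.exp (2*(γ-u)*t) := by
      rw [← Real.exp_add]; ring_nf
    have h6 := mul_le_mul_of_nonneg_right h3 (Real.exp_pos (2*u*t)).le
    nlinarith [Real.exp_pos (2*u*T₀)]

lemma choose_u {γ : ℝ} (hγ : 0 < γ) {h : ℝ → ℝ} (hh : IntegrableOn h (Set.Ioc 0 γ))
    {ε : ℝ} (hε : 0 < ε) :
    ∃ u, 0 < u ∧ u < γ ∧ (∫ x in Set.Ioc u γ, |h x|) ≤ ε := by
  have habs : IntegrableOn (fun x => |h x|) (Set.Ioc 0 γ) := hh.abs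
  have hIcc : IntegrableOn (fun x => |h x|) (Set.Icc 0 γ) :=
    habs.congr_set_ae (MeasureTheory.Ioc_ae_eq_Icc).symm
  have hcont := intervalIntegral.continuousOn_primitive hIcc
  have hγmem : γ ∈ Set.Icc (0:ℝ) γ := ⟨hγ.le, le_refl γ⟩
  have hcw := hcont γ hγmem
  rw [Metric.continuousWithinAt_iff] at hcw
  obtain ⟨δ, hδ0, hδ⟩ := hcw ε hε
  set u := max (γ/2) (γ - δ/2) with hu
  have hu0 : 0 < u := lt_of_lt_of_le (by linarith) (le_max_left _ _)
  have huγ : u < γ := max_lt (by linarith) (by linarith)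
  have humem : u ∈ Set.Icc (0:ℝ) γ := ⟨hu0.le, huγ.le⟩
  have hdist : dist u γ < δ := by
    rw [Real.dist_eq, abs_of_nonpos (by linarith)]
    have : γ - δ/2 ≤ u := le_max_right _ _
    linarith
  have hb := hδ humem hdist
  rw [Real.dist_eq] at hb
  have hb' := (abs_lt.1 hb).1
  refine ⟨u, hu0, huγ, ?_⟩
  have hadd : (∫ x in Set.Ioc (0:ℝ) u, |h x|) + (∫ x in Set.Ioc u γ, |h x|)
      = ∫ x in Set.Ioc (0:ℝ) γ, |h x| := by
    rw [← MeasureTheory.setIntegral_union (Set.Ioc_disjoint_Ioc_of_le le_rfl) measurableSet_Ioc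
      (habs.mono_set (Set.Ioc_subset_Ioc_right huγ.le))
      (habs.mono_set (Set.Ioc_subset_Ioc_left hu0.le)),
      Set.Ioc_union_Ioc_eq_Ioc hu0.le huγ.le]
  linarith

/-- Integration-by-parts asymptotics of `α₂(k) = ∫_0^γ (2k²p + q)e^{−2ikx}dx` in the closed
upper half-plane: with `p(x) = c + ∫_0^x h`, for every `ε > 0` there are `C, R > 0` such that
for all `k` with `Im k ≥ 0` and `|k| ≥ R`,
`|α₂(k) − ik p(γ)e^{−2ikγ}| ≤ ε|k|e^{2γ Im k} + C|k|`. -/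
theorem alpha2_asymptotics (γ : ℝ) (hγ : 0 < γ) (h : ℝ → ℝ) (c : ℝ)
    (hh : IntegrableOn h (Set.Ioc 0 γ)) (q : ℝ → ℝ)
    (hq : IntegrableOn q (Set.Ioc 0 γ)) :
    ∀ ε > (0 : ℝ), ∃ C > (0 : ℝ), ∃ R > (0 : ℝ), ∀ k : ℂ, 0 ≤ k.im → R ≤ ‖k‖ →
      ‖(∫ x in (0 : ℝ)..γ,
            (2 * k ^ 2 * ((c + ∫ s in (0 : ℝ)..x, h s : ℝ) : ℂ) + (q x : ℂ))
              * Complex.exp (-(2 * Complex.I * k * x)))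
          - Complex.I * k * ((c + ∫ s in (0 : ℝ)..γ, h s : ℝ) : ℂ)
              * Complex.exp (-(2 * Complex.I * k * γ))‖
        ≤ ε * ‖k‖ * Real.exp (2 * γ * k.im) + C * ‖k‖ := by
  intro ε hε
  set M := ∫ x in Set.Ioc (0:ℝ) γ, |h x| with hMdef
  have hM0 : 0 ≤ M := setIntegral_nonneg measurableSet_Ioc (fun x _ => abs_nonneg _)
  set N := ∫ x in Set.Ioc (0:ℝ) γ, |q x| with hNdef
  have hN0 : 0 ≤ N := setIntegral_nonneg measurableSet_Ioc (fun x _ => abs_nonneg _)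
  obtain ⟨u, hu0, huγ, hucut⟩ := choose_u hγ hh (show (0:ℝ) < ε/4 by linarith)
  set C₁ := M * Real.exp (2*u*(max 1 (Real.log (4*M/ε + 1) / (2*(γ-u))))) with hC1def
  have hC10 : 0 ≤ C₁ := by positivity
  refine ⟨|c| + C₁ + 1, by positivity, max 1 (4*N/ε), lt_of_lt_of_le one_pos (le_max_left _ _), ?_⟩
  intro k him hkR
  have hknorm : 1 ≤ ‖k‖ := le_trans (le_max_left _ _) hkR
  have hkN : 4*N/ε ≤ ‖k‖ := le_trans (le_max_right _ _) hkR
  have hk : k ≠ 0 := by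
    intro h0
    rw [h0, norm_zero] at hknorm
    linarith
  rw [key_identity hγ c hh hq k him hk]
  set t := k.im with htdef
  -- integrability of the abs integrand
  have ig : IntegrableOn (fun x => |h x| * Real.exp (2*x*t)) (Set.Ioc 0 γ) := by
    have habs : IntegrableOn (fun x => |h x|) (Set.Ioc 0 γ) := hh.abs
    refine (habs.mul_const (Real.exp (2*γ*t))).mono'
      (habs.aestronglyMeasurable.mul
        ((Real.continuous_exp.comp (by continuity)).aestronglyMeasurable)) ?_
    filter_upwards [ae_restrict_mem measurableSet_Ioc] with x hx
    rw [Real.norm_eq_abs,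
      _root_.abs_of_nonneg (show (0:ℝ) ≤ |h x| * Real.exp (2*x*t) by positivity)]
    have : Real.exp (2*x*t) ≤ Real.exp (2*γ*t) := Real.exp_le_exp.2 (by nlinarith [hx.2])
    exact mul_le_mul_of_nonneg_left this (abs_nonneg _)
  -- bound on J
  have hJ : ‖∫ x in Set.Ioc (0:ℝ) γ, (h x : ℂ) * Complex.exp (-(2*Complex.I*k*x))‖
      ≤ (ε/2) * Real.exp (2*γ*t) + C₁ := by
    have step1 : ‖∫ x in Set.Ioc (0:ℝ) γ, (h x : ℂ) * Complex.exp (-(2*Complex.I*k*x))‖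
        ≤ ∫ x in Set.Ioc (0:ℝ) γ, |h x| * Real.exp (2*x*t) := by
      refine le_trans (norm_integral_le_integral_norm _) (le_of_eq ?_)
      refine setIntegral_congr_fun measurableSet_Ioc (fun x hx => ?_)
      rw [norm_mul, norm_Ek, Complex.norm_real, Real.norm_eq_abs]
    have hsplit : (∫ x in Set.Ioc (0:ℝ) γ, |h x| * Real.exp (2*x*t))
        = (∫ x in Set.Ioc (0:ℝ) u, |h x| * Real.exp (2*x*t))
          + ∫ x in Set.Ioc u γ, |h x| * Real.exp (2*x*t) := by
      rw [← MeasureTheory.setIntegral_union (Set.Ioc_disjoint_Ioc_of_le le_rfl) measurableSet_Ioc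
        (ig.mono_set (Set.Ioc_subset_Ioc_right huγ.le))
        (ig.mono_set (Set.Ioc_subset_Ioc_left hu0.le)),
        Set.Ioc_union_Ioc_eq_Ioc hu0.le huγ.le]
    have hpiece1 : (∫ x in Set.Ioc (0:ℝ) u, |h x| * Real.exp (2*x*t))
        ≤ M * Real.exp (2*u*t) := by
      have habs : IntegrableOn (fun x => |h x|) (Set.Ioc 0 γ) := hh.abs
      calc (∫ x in Set.Ioc (0:ℝ) u, |h x| * Real.exp (2*x*t))
          ≤ ∫ x in Set.Ioc (0:ℝ) u, |h x| * Real.exp (2*u*t) := by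
            refine setIntegral_mono_on (ig.mono_set (Set.Ioc_subset_Ioc_right huγ.le))
              ((habs.mono_set (Set.Ioc_subset_Ioc_right huγ.le)).mul_const _)
              measurableSet_Ioc (fun x hx => ?_)
            exact mul_le_mul_of_nonneg_left
              (Real.exp_le_exp.2 (by nlinarith [hx.2])) (abs_nonneg _)
        _ = (∫ x in Set.Ioc (0:ℝ) u, |h x|) * Real.exp (2*u*t) := by
            rw [MeasureTheory.integral_mul_const]
        _ ≤ M * Real.exp (2*u*t) := by
            refine mul_le_mul_of_nonneg_right ?_ (Real.exp_pos _).le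
            exact setIntegral_mono_set habs
              (Filter.Eventually.of_forall (fun x => abs_nonneg _))
              (HasSubset.Subset.eventuallyLE (Set.Ioc_subset_Ioc_right huγ.le))
    have hpiece2 : (∫ x in Set.Ioc u γ, |h x| * Real.exp (2*x*t))
        ≤ (ε/4) * Real.exp (2*γ*t) := by
      have habs : IntegrableOn (fun x => |h x|) (Set.Ioc 0 γ) := hh.abs
      calc (∫ x in Set.Ioc u γ, |h x| * Real.exp (2*x*t))
          ≤ ∫ x in Set.Ioc u γ, |h x| * Real.exp (2*γ*t) := by
            refine setIntegral_mono_on (ig.mono_set (Set.Ioc_subset_Ioc_left hu0.le))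
              ((habs.mono_set (Set.Ioc_subset_Ioc_left hu0.le)).mul_const _)
              measurableSet_Ioc (fun x hx => ?_)
            exact mul_le_mul_of_nonneg_left
              (Real.exp_le_exp.2 (by nlinarith [hx.2])) (abs_nonneg _)
        _ = (∫ x in Set.Ioc u γ, |h x|) * Real.exp (2*γ*t) := by
            rw [MeasureTheory.integral_mul_const]
        _ ≤ (ε/4) * Real.exp (2*γ*t) :=
            mul_le_mul_of_nonneg_right hucut (Real.exp_pos _).le
    have hsplit2 := exp_split (ε := ε) hM0 hε hu0.le huγ him
    calc ‖∫ x in Set.Ioc (0:ℝ) γ, (h x : ℂ) * Complex.exp (-(2*Complex.I*k*x))‖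
        ≤ ∫ x in Set.Ioc (0:ℝ) γ, |h x| * Real.exp (2*x*t) := step1
      _ = _ + _ := hsplit
      _ ≤ M * Real.exp (2*u*t) + (ε/4) * Real.exp (2*γ*t) := add_le_add hpiece1 hpiece2
      _ ≤ (ε/2) * Real.exp (2*γ*t) + C₁ := by rw [hC1def]; linarith
  -- bound on Q
  have hQb : ‖∫ x in Set.Ioc (0:ℝ) γ, (q x : ℂ) * Complex.exp (-(2*Complex.I*k*x))‖
      ≤ N * Real.exp (2*γ*t) := by
    refine le_trans (norm_integral_le_integral_norm _) ?_
    have : (∫ x in Set.Ioc (0:ℝ) γ, ‖(q x : ℂ) * Complex.exp (-(2*Complex.I*k*x))‖)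
        ≤ ∫ x in Set.Ioc (0:ℝ) γ, |q x| * Real.exp (2*γ*t) := by
      have habs : IntegrableOn (fun x => |q x|) (Set.Ioc 0 γ) := hq.abs
      refine setIntegral_mono_on ?_ (habs.mul_const _) measurableSet_Ioc (fun x hx => ?_)
      · exact (mulEk_integrable hγ hq k him).norm
      · rw [norm_mul, norm_Ek, Complex.norm_real, Real.norm_eq_abs]
        exact mul_le_mul_of_nonneg_left
          (Real.exp_le_exp.2 (by nlinarith [hx.2])) (abs_nonneg _)
    rw [MeasureTheory.integral_mul_const] at this
    exact this
  -- assemble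
  set J := ∫ x in Set.Ioc (0:ℝ) γ, (h x : ℂ) * Complex.exp (-(2*Complex.I*k*x)) with hJdef
  set Q := ∫ x in Set.Ioc (0:ℝ) γ, (q x : ℂ) * Complex.exp (-(2*Complex.I*k*x)) with hQdef
  have e1 : ‖-(Complex.I * k * (c:ℂ))‖ = ‖k‖ * |c| := by
    rw [norm_neg, norm_mul, norm_mul, Complex.norm_I, one_mul, Complex.norm_real,
      Real.norm_eq_abs]
  have e2 : ‖Complex.I * k * J‖ = ‖k‖ * ‖J‖ := by
    rw [norm_mul, norm_mul, Complex.norm_I, one_mul]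
  have tri : ‖-(Complex.I * k * (c:ℂ)) - Complex.I * k * J + Q‖
      ≤ ‖k‖ * |c| + ‖k‖ * ‖J‖ + ‖Q‖ := by
    calc ‖-(Complex.I * k * (c:ℂ)) - Complex.I * k * J + Q‖
        ≤ ‖-(Complex.I * k * (c:ℂ)) - Complex.I * k * J‖ + ‖Q‖ := norm_add_le _ _
      _ ≤ ‖-(Complex.I * k * (c:ℂ))‖ + ‖Complex.I * k * J‖ + ‖Q‖ := by
          linarith [norm_sub_le (-(Complex.I * k * (c:ℂ))) (Complex.I * k * J)]
      _ = ‖k‖ * |c| + ‖k‖ * ‖J‖ + ‖Q‖ := by rw [e1, e2]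
  have hNk : N ≤ ε/4 * ‖k‖ := by
    rw [div_le_iff₀ hε] at hkN
    nlinarith
  have hJ0 : 0 ≤ ‖J‖ := norm_nonneg _
  have hE0 : (0:ℝ) < Real.exp (2*γ*t) := Real.exp_pos _
  calc ‖-(Complex.I * k * (c:ℂ)) - Complex.I * k * J + Q‖
      ≤ ‖k‖ * |c| + ‖k‖ * ‖J‖ + ‖Q‖ := tri
    _ ≤ ‖k‖ * |c| + ‖k‖ * ((ε/2) * Real.exp (2*γ*t) + C₁) + N * Real.exp (2*γ*t) := by
        have := mul_le_mul_of_nonneg_left hJ (le_trans zero_le_one hknorm)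
        linarith [hQb]
    _ ≤ ε * ‖k‖ * Real.exp (2*γ*t) + (|c| + C₁ + 1) * ‖k‖ := by
        have h1 : N * Real.exp (2*γ*t) ≤ (ε/4 * ‖k‖) * Real.exp (2*γ*t) :=
          mul_le_mul_of_nonneg_right hNk hE0.le
        have hk0 : (0:ℝ) < ‖k‖ := lt_of_lt_of_le one_pos hknorm
        nlinarith [mul_pos (mul_pos (by linarith : (0:ℝ) < ε/4) hk0) hE0]
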